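/- Let d > 0, let h : ℝ → ℝ and g : ℝ → ℝ be measurable functions with support contained in [−d,d], and define f : ℝ² → ℝ by f(x,y) = h((y−x)/2)·g((y+x)/2). If h is bounded and g is Lipschitz, then f is 1-absolutely continuous on ℝ², i.e. f ∈ 1-AC²(ℝ²,ℝ). -/

import Mathlib

open MeasureTheory Metric Set Filter

noncomputable section

/-- The closed interval (box) `[a,b]` in `ℝ²`. -/
def box (a b : EuclideanSpace ℝ (Fin 2)) : Set (EuclideanSpace ℝ (Fin 2)) :=
  {x | ∀ ν, a ν ≤ x ν ∧ x ν ≤ b ν}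

/-- `f` is 1-absolutely continuous on `ℝ²`: for every `ε > 0` there is `δ > 0` such that
for every finite collection of pairwise disjoint 1-regular intervals (squares)
`[aᵢ,bᵢ] ⊆ ℝ²`, `∑ ℒ²([aᵢ,bᵢ]) < δ` implies `∑ |f(bᵢ) − f(aᵢ)|² < ε`. -/
def OneAC (f : EuclideanSpace ℝ (Fin 2) → ℝ) : Prop :=
  ∀ ε > 0, ∃ δ > 0, ∀ (k : ℕ) (a b : Fin k → EuclideanSpace ℝ (Fin 2)),
    (∀ i, ∀ ν, a i ν ≤ b i ν) →
    (Pairwise fun i j => Disjoint (box (a i) (b i)) (box (a j) (b j))) →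
    (∀ i, (⨆ ν, |a i ν - b i ν|) ^ 2 ≤ (volume (box (a i) (b i))).toReal) →
    ∑ i, (volume (box (a i) (b i))).toReal < δ →
    ∑ i, |f (b i) - f (a i)| ^ 2 < ε

/-- The volume of a box `[a,b] ⊆ ℝ²` is the product of its side lengths. -/
lemma vol_box (a b : EuclideanSpace ℝ (Fin 2)) (hab : ∀ ν, a ν ≤ b ν) :
    (volume (box a b)).toReal = (b 0 - a 0) * (b 1 - a 1) := by
  have hbe : box a b = (MeasurableEquiv.toLp 2 (Fin 2 → ℝ)).symm ⁻¹'
      (Set.univ.pi fun ν => Icc (a ν) (b ν)) := by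
    ext x
    simp [box, Icc]
  rw [hbe, (EuclideanSpace.volume_preserving_symm_measurableEquiv_toLp (Fin 2)).measure_preimage
    ((MeasurableSet.univ_pi fun ν => measurableSet_Icc).nullMeasurableSet)]
  rw [volume_pi_pi]
  simp only [Real.volume_Icc, Fin.prod_univ_two]
  rw [← ENNReal.ofReal_mul (by linarith [hab 0]), ENNReal.toReal_ofReal]
  nlinarith [hab 0, hab 1]

/-- If `h : ℝ → ℝ` and `g : ℝ → ℝ` are measurable with support contained in `[−d,d]`,
`h` is bounded, `g` is Lipschitz, and `f(x,y) = h((y−x)/2)·g((y+x)/2)`, then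
`f ∈ 1-AC²(ℝ²,ℝ)`. -/
theorem oneAC_of_bounded_mul_lipschitz (d : ℝ) (hd : 0 < d)
    (h g : ℝ → ℝ) (hmeas : Measurable h) (gmeas : Measurable g)
    (hsupp : Function.support h ⊆ Set.Icc (-d) d)
    (gsupp : Function.support g ⊆ Set.Icc (-d) d)
    (hbdd : ∃ M : ℝ, ∀ s, |h s| ≤ M)
    (glip : ∃ K : NNReal, LipschitzWith K g)
    (f : EuclideanSpace ℝ (Fin 2) → ℝ)
    (hf : ∀ p : EuclideanSpace ℝ (Fin 2), f p = h ((p 1 - p 0) / 2) * g ((p 1 + p 0) / 2)) :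
    OneAC f := by
  obtain ⟨M, hbdd⟩ := hbdd
  obtain ⟨K, glip⟩ := glip
  have hM : 0 ≤ M := le_trans (abs_nonneg _) (hbdd 0)
  have hK : (0 : ℝ) ≤ (K : ℝ) := K.2
  set C : ℝ := M ^ 2 * (K : ℝ) ^ 2 with hC
  have hC0 : 0 ≤ C := by positivity
  intro ε hε
  refine ⟨ε / (C + 1), by positivity, fun k a b hab _ hreg hsum => ?_⟩
  have key : ∀ i, |f (b i) - f (a i)| ^ 2 ≤ C * (volume (box (a i) (b i))).toReal := by
    intro i
    set s0 := b i 0 - a i 0 with hs0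
    set s1 := b i 1 - a i 1 with hs1
    have h0 : 0 ≤ s0 := sub_nonneg.2 (hab i 0)
    have h1 : 0 ≤ s1 := sub_nonneg.2 (hab i 1)
    set u := ⨆ ν, |a i ν - b i ν| with hu
    have hbd : BddAbove (Set.range fun ν => |a i ν - b i ν|) :=
      Set.Finite.bddAbove (Set.finite_range _)
    have hu0 : s0 ≤ u := by
      have := le_ciSup hbd (0 : Fin 2)
      rwa [abs_sub_comm, abs_of_nonneg h0] at this
    have hu1 : s1 ≤ u := by
      have := le_ciSup hbd (1 : Fin 2)
      rwa [abs_sub_comm, abs_of_nonneg h1] at this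
    have hvol : (volume (box (a i) (b i))).toReal = s0 * s1 := vol_box _ _ (hab i)
    have hreg' : u ^ 2 ≤ s0 * s1 := by rw [← hvol]; exact hreg i
    have heq : s0 = s1 := le_antisymm (by nlinarith) (by nlinarith)
    have harg : (b i 1 - b i 0) / 2 = (a i 1 - a i 0) / 2 := by
      rw [hs0, hs1] at heq; linarith
    have key1 : |f (b i) - f (a i)| ≤ M * ((K : ℝ) * s0) := by
      rw [hf (b i), hf (a i), harg, ← mul_sub, abs_mul]
      have hg : |g ((b i 1 + b i 0) / 2) - g ((a i 1 + a i 0) / 2)| ≤ (K : ℝ) * s0 := by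
        have hgd := glip.dist_le_mul ((b i 1 + b i 0) / 2) ((a i 1 + a i 0) / 2)
        rw [Real.dist_eq] at hgd
        calc |g ((b i 1 + b i 0) / 2) - g ((a i 1 + a i 0) / 2)|
            ≤ (K : ℝ) * |(b i 1 + b i 0) / 2 - (a i 1 + a i 0) / 2| := hgd
          _ ≤ (K : ℝ) * s0 := by
              apply mul_le_mul_of_nonneg_left _ hK
              rw [abs_le]
              constructor <;> rw [hs0] at heq ⊢ <;> nlinarith
      exact mul_le_mul (hbdd _) hg (abs_nonneg _) hM
    calc |f (b i) - f (a i)| ^ 2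
        ≤ (M * ((K : ℝ) * s0)) ^ 2 := pow_le_pow_left₀ (abs_nonneg _) key1 2
      _ = C * (s0 * s1) := by rw [← heq, hC]; ring
      _ = C * (volume (box (a i) (b i))).toReal := by rw [hvol]
  have hvol_nonneg : (0 : ℝ) ≤ ∑ i, (volume (box (a i) (b i))).toReal :=
    Finset.sum_nonneg fun i _ => ENNReal.toReal_nonneg
  calc ∑ i, |f (b i) - f (a i)| ^ 2
      ≤ ∑ i, C * (volume (box (a i) (b i))).toReal :=
        Finset.sum_le_sum fun i _ => key i
    _ = C * ∑ i, (volume (box (a i) (b i))).toReal := by rw [Finset.mul_sum]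
    _ ≤ C * (ε / (C + 1)) := mul_le_mul_of_nonneg_left hsum.le hC0
    _ < ε := by
        rw [mul_div_assoc', div_lt_iff₀ (by positivity)]
        nlinarith
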